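/- In the FLAG setting, assume additionally that δ ≤ 1/d, and set q_T := Σ_{i=1}^d s_T(i). Then for every u ∈ C: F(y_{T+1}) − F(u) ≤ 2001·q_T²·L·D/T³. In particular, since √T ≤ q_T ≤ √(d·T), the bound is at most 2001·L·D·d/T². -/

import Mathlib

open scoped RealInnerProductSpace

private lemma le_of_forall_param {a b c : ℝ}
    (h : ∀ t : ℝ, 0 < t → t ≤ 1 → a ≤ b + t * c) : a ≤ b := by
  rcases le_or_gt c 0 with hc | hc
  · have := h 1 one_pos le_rfl; linarith
  · by_contra hab
    push_neg at hab
    have hab' : 0 < a - b := by linarith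
    have ht0 : 0 < min 1 ((a - b) / (2 * c)) := by positivity
    have h1 := h _ ht0 (min_le_left _ _)
    have h2 : min 1 ((a - b) / (2 * c)) ≤ (a - b) / (2 * c) := min_le_right _ _
    have h4 : ((a - b) / (2 * c)) * c = (a - b) / 2 := by field_simp
    nlinarith

private lemma min_strong {E : Type*} [AddCommGroup E] [Module ℝ E] {C : Set E}
    (hC : Convex ℝ C) (φ R : E → ℝ) (m : E) (hm : m ∈ C)
    (hmin : ∀ w ∈ C, φ m ≤ φ w)
    (hsc : ∀ w ∈ C, ∀ t : ℝ, 0 < t → t ≤ 1 →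
      φ ((1 - t) • m + t • w) ≤ (1 - t) * φ m + t * φ w - t * (1 - t) * R w) :
    ∀ w ∈ C, φ m + R w ≤ φ w := by
  intro w hw
  apply le_of_forall_param (c := R w)
  intro t ht0 ht1
  have hmem : (1 - t) • m + t • w ∈ C := hC hm hw (by linarith) (le_of_lt ht0) (by ring)
  have h1 := hmin _ hmem
  have h2 := hsc w hw t ht0 ht1
  have h3 : t * φ m ≤ t * φ w - t * (1 - t) * R w := by nlinarith
  have h4 : φ m ≤ φ w - (1 - t) * R w := by
    rw [← mul_le_mul_iff_right₀ ht0]; nlinarith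
  linarith


variable {n : ℕ}


private lemma curve_hasDerivAt (f : EuclideanSpace ℝ (Fin n) → ℝ)
    (f' : EuclideanSpace ℝ (Fin n) → EuclideanSpace ℝ (Fin n))
    (hdiff : ∀ v, HasGradientAt f (f' v) v)
    (a v : EuclideanSpace ℝ (Fin n)) (t : ℝ) :
    HasDerivAt (fun τ : ℝ => f (a + τ • v)) ⟪f' (a + t • v), v⟫ t := by
  have hc : HasDerivAt (fun τ : ℝ => a + τ • v) v t := by
    simpa using ((hasDerivAt_id t).smul_const v).const_add a
  have hf := (hdiff (a + t • v)).hasFDerivAt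
  have := hf.comp_hasDerivAt t hc
  simpa [InnerProductSpace.toDual_apply_apply, Function.comp_def] using this

private lemma grad_convex_le (f : EuclideanSpace ℝ (Fin n) → ℝ)
    (f' : EuclideanSpace ℝ (Fin n) → EuclideanSpace ℝ (Fin n))
    (hconv : ConvexOn ℝ Set.univ f) (hdiff : ∀ v, HasGradientAt f (f' v) v)
    (a w : EuclideanSpace ℝ (Fin n)) :
    f a + ⟪f' a, w - a⟫ ≤ f w := by
  set φ : ℝ → ℝ := fun τ => f (a + τ • (w - a)) with hφ
  have hder : HasDerivAt φ ⟪f' a, w - a⟫ 0 := by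
    simpa using curve_hasDerivAt f f' hdiff a (w - a) 0
  have hslope : Filter.Tendsto (slope φ 0) (nhdsWithin 0 (Set.Ioi 0)) (nhds ⟪f' a, w - a⟫) := by
    have := hasDerivAt_iff_tendsto_slope.mp hder
    exact this.mono_left (nhdsWithin_mono 0 (by intro x hx; exact ne_of_gt hx))
  have hbound : ∀ᶠ t in nhdsWithin 0 (Set.Ioi 0), slope φ 0 t ≤ f w - f a := by
    filter_upwards [Ioc_mem_nhdsGT_of_mem (Set.left_mem_Ico.mpr one_pos)] with t ht
    obtain ⟨ht0, ht1⟩ := ht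
    have hcomb : a + t • (w - a) = (1 - t) • a + t • w := by module
    have hcv := hconv.2 (Set.mem_univ a) (Set.mem_univ w)
      (by linarith : (0:ℝ) ≤ 1 - t) (le_of_lt ht0) (by ring)
    have hφt : φ t ≤ (1 - t) * f a + t * f w := by
      rw [hφ]; simp only [hcomb]; simpa [smul_eq_mul] using hcv
    have hφ0 : φ 0 = f a := by simp [hφ]
    rw [slope_def_field, sub_zero, div_le_iff₀ ht0]
    nlinarith [hφt, hφ0.le, hφ0.ge]
  have : ⟪f' a, w - a⟫ ≤ f w - f a := le_of_tendsto hslope hbound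
  linarith

private lemma smooth_upper {C : Set (EuclideanSpace ℝ (Fin n))} (hC : Convex ℝ C)
    (f : EuclideanSpace ℝ (Fin n) → ℝ)
    (f' : EuclideanSpace ℝ (Fin n) → EuclideanSpace ℝ (Fin n))
    (hdiff : ∀ v, HasGradientAt f (f' v) v) (L : ℝ)
    (hflip : ∀ a ∈ C, ∀ b ∈ C, ‖f' a - f' b‖ ≤ L * ‖a - b‖)
    {a b : EuclideanSpace ℝ (Fin n)} (ha : a ∈ C) (hb : b ∈ C) :
    f b ≤ f a + ⟪f' a, b - a⟫ + L / 2 * ‖b - a‖ ^ 2 := by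
  set v := b - a with hv
  set γ : ℝ → ℝ := fun t => f (a + t • v) - t * ⟪f' a, v⟫ - L * t ^ 2 / 2 * ‖v‖ ^ 2 with hγ
  have hder : ∀ t : ℝ, HasDerivAt γ
      (⟪f' (a + t • v), v⟫ - ⟪f' a, v⟫ - L * t * ‖v‖ ^ 2) t := by
    intro t
    have h1 := curve_hasDerivAt f f' hdiff a v t
    have h2 : HasDerivAt (fun τ : ℝ => τ * ⟪f' a, v⟫) ⟪f' a, v⟫ t := by
      simpa using (hasDerivAt_id t).mul_const ⟪f' a, v⟫
    have h3 : HasDerivAt (fun τ : ℝ => L * τ ^ 2 / 2 * ‖v‖ ^ 2) (L * t * ‖v‖ ^ 2) t := by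
      have : HasDerivAt (fun τ : ℝ => τ ^ 2) (2 * t) t := by
        simpa using hasDerivAt_pow 2 t
      have := ((this.const_mul L).div_const 2).mul_const (‖v‖ ^ 2)
      refine this.congr_deriv ?_
      ring
    exact (h1.sub h2).sub h3
  have hanti : AntitoneOn γ (Set.Icc 0 1) := by
    apply antitoneOn_of_deriv_nonpos (convex_Icc 0 1)
    · exact fun t _ => ((hder t).continuousAt).continuousWithinAt
    · intro t ht
      exact ((hder t).differentiableAt).differentiableWithinAt
    · intro t ht
      rw [interior_Icc] at ht
      obtain ⟨ht0, ht1⟩ := ht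
      rw [(hder t).deriv]
      have hmem : a + t • v ∈ C := by
        have := hC ha hb (by linarith : (0:ℝ) ≤ 1 - t) (le_of_lt ht0) (by ring)
        have heq : (1 - t) • a + t • b = a + t • v := by rw [hv]; module
        rwa [heq] at this
      have hcs : ⟪f' (a + t • v) - f' a, v⟫ ≤ ‖f' (a + t • v) - f' a‖ * ‖v‖ :=
        real_inner_le_norm _ _
      have hlip := hflip _ hmem _ ha
      have hna : ‖a + t • v - a‖ = t * ‖v‖ := by
        simp [norm_smul, abs_of_pos ht0]
      rw [hna] at hlip
      have hsub : ⟪f' (a + t • v) - f' a, v⟫ = ⟪f' (a + t • v), v⟫ - ⟪f' a, v⟫ :=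
        inner_sub_left _ _ _
      nlinarith [norm_nonneg v, norm_nonneg (f' (a + t • v) - f' a), mul_le_mul_of_nonneg_right hlip (norm_nonneg v)]
  have h01 := hanti (Set.mem_Icc.mpr ⟨le_rfl, zero_le_one⟩) (Set.mem_Icc.mpr ⟨zero_le_one, le_rfl⟩) zero_le_one
  have hγ0 : γ 0 = f a := by simp [hγ]
  have hγ1 : γ 1 = f b - ⟪f' a, v⟫ - L / 2 * ‖v‖ ^ 2 := by
    simp [hγ]; simp [hv]
  rw [hγ0, hγ1] at h01
  linarith

private lemma adagrad_sum (a : ℕ → ℝ) (ha : ∀ k, 0 ≤ a k) (δ : ℝ) (hδ : 0 < δ) :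
    ∀ T : ℕ, ∑ k ∈ Finset.Icc 1 T, a k / (Real.sqrt (∑ j ∈ Finset.Icc 1 k, a j) + δ)
      ≤ 2 * Real.sqrt (∑ j ∈ Finset.Icc 1 T, a j) := by
  intro T
  induction T with
  | zero => simp
  | succ T ih =>
    rw [Finset.sum_Icc_succ_top (Nat.one_le_iff_ne_zero.mpr (Nat.succ_ne_zero T)),
        Finset.sum_Icc_succ_top (Nat.one_le_iff_ne_zero.mpr (Nat.succ_ne_zero T))]
    set b := ∑ j ∈ Finset.Icc 1 T, a j with hb
    have hb0 : 0 ≤ b := Finset.sum_nonneg fun j _ => ha j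
    set b' := b + a (T + 1) with hb'
    have hb'0 : 0 ≤ b' := by have := ha (T + 1); linarith
    have hsb := Real.sqrt_nonneg b
    have hsb' := Real.sqrt_nonneg b'
    have hsqb : Real.sqrt b ^ 2 = b := Real.sq_sqrt hb0
    have hsqb' : Real.sqrt b' ^ 2 = b' := Real.sq_sqrt hb'0
    have hmono : Real.sqrt b ≤ Real.sqrt b' := Real.sqrt_le_sqrt (by linarith [ha (T + 1)])
    have key : a (T + 1) / (Real.sqrt b' + δ) ≤ 2 * Real.sqrt b' - 2 * Real.sqrt b := by
      rcases eq_or_lt_of_le hb'0 with hz | hpos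
      · have haz : a (T + 1) = 0 := by
          have := ha (T + 1); nlinarith [hb0]
        have hbz : b = 0 := by nlinarith [ha (T + 1)]
        simp [haz, hbz, ← hz]
      · have hsp : 0 < Real.sqrt b' := Real.sqrt_pos.mpr hpos
        rw [div_le_iff₀ (by linarith)]
        nlinarith [ha (T + 1)]
    linarith [ih]



private lemma norm_combo_sq (u v : EuclideanSpace ℝ (Fin n)) (t : ℝ) :
    ‖(1 - t) • u + t • v‖ ^ 2
      = (1 - t) * ‖u‖ ^ 2 + t * ‖v‖ ^ 2 - t * (1 - t) * ‖u - v‖ ^ 2 := by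
  have h1 : (1 - t) • u + t • v = u + t • (v - u) := by module
  have e1 : ‖u + t • (v - u)‖ ^ 2
      = ‖u‖ ^ 2 + 2 * (t * ⟪u, v - u⟫) + t ^ 2 * ‖v - u‖ ^ 2 := by
    rw [norm_add_sq_real, real_inner_smul_right, norm_smul]
    simp [mul_pow, sq_abs]
  have e2 : ‖v‖ ^ 2 = ‖u‖ ^ 2 + 2 * ⟪u, v - u⟫ + ‖v - u‖ ^ 2 := by
    have hv : v = u + (v - u) := by abel
    calc ‖v‖ ^ 2 = ‖u + (v - u)‖ ^ 2 := by rw [← hv]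
      _ = _ := norm_add_sq_real u (v - u)
  have e3 : ‖u - v‖ = ‖v - u‖ := norm_sub_rev u v
  rw [h1, e1, e2, e3]; ring

private lemma prox_lemma {C : Set (EuclideanSpace ℝ (Fin n))} (hC : Convex ℝ C)
    (h : EuclideanSpace ℝ (Fin n) → ℝ) (hhconv : ConvexOn ℝ Set.univ h)
    (L : ℝ) (hL : 0 < L) (G xk yp : EuclideanSpace ℝ (Fin n)) (hyp : yp ∈ C)
    (hmin : ∀ w ∈ C, h yp + ⟪G, yp - xk⟫ + L / 2 * ‖yp - xk‖ ^ 2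
      ≤ h w + ⟪G, w - xk⟫ + L / 2 * ‖w - xk‖ ^ 2) :
    ∀ w ∈ C, h yp + ⟪G, yp - xk⟫ + L / 2 * ‖yp - xk‖ ^ 2 + L / 2 * ‖w - yp‖ ^ 2
      ≤ h w + ⟪G, w - xk⟫ + L / 2 * ‖w - xk‖ ^ 2 := by
  have := min_strong hC
    (fun w => h w + ⟪G, w - xk⟫ + L / 2 * ‖w - xk‖ ^ 2)
    (fun w => L / 2 * ‖w - yp‖ ^ 2) yp hyp hmin ?_
  · intro w hw; have h2 := this w hw
    have : ‖w - yp‖ = ‖yp - w‖ := norm_sub_rev _ _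
    rw [this] at h2 ⊢
    linarith
  · intro w hw t ht0 ht1
    have hhc := hhconv.2 (Set.mem_univ yp) (Set.mem_univ w)
      (by linarith : (0:ℝ) ≤ 1 - t) (le_of_lt ht0) (by ring)
    simp only [smul_eq_mul] at hhc
    have hlin : (1 - t) • yp + t • w - xk = (1 - t) • (yp - xk) + t • (w - xk) := by
      module
    have hin : ⟪G, (1 - t) • yp + t • w - xk⟫
        = (1 - t) * ⟪G, yp - xk⟫ + t * ⟪G, w - xk⟫ := by
      rw [hlin, inner_add_right, real_inner_smul_right, real_inner_smul_right]
    have hnrm : ‖(1 - t) • yp + t • w - xk‖ ^ 2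
        = (1 - t) * ‖yp - xk‖ ^ 2 + t * ‖w - xk‖ ^ 2
          - t * (1 - t) * ‖yp - w‖ ^ 2 := by
      rw [hlin, norm_combo_sq]
      congr 3
      abel
    rw [hin, hnrm]
    have : ‖yp - w‖ = ‖w - yp‖ := norm_sub_rev _ _
    rw [this]
    nlinarith [hhc]

private lemma mirror_lemma {C : Set (EuclideanSpace ℝ (Fin n))} (hC : Convex ℝ C)
    (c : Fin n → ℝ) (hc : ∀ i, 0 < c i) (v zk zp : EuclideanSpace ℝ (Fin n))
    (hzp : zp ∈ C)
    (hmin : ∀ w ∈ C, ⟪v, zp - zk⟫ + 1 / 2 * ∑ i, c i * (zp i - zk i) ^ 2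
      ≤ ⟪v, w - zk⟫ + 1 / 2 * ∑ i, c i * (w i - zk i) ^ 2) :
    ∀ w ∈ C, ⟪v, zk - w⟫ ≤ 1 / 2 * ∑ i, v i ^ 2 / c i
      + 1 / 2 * ∑ i, c i * (w i - zk i) ^ 2
      - 1 / 2 * ∑ i, c i * (w i - zp i) ^ 2 := by
  have hstrong := min_strong hC
    (fun w => ⟪v, w - zk⟫ + 1 / 2 * ∑ i, c i * (w i - zk i) ^ 2)
    (fun w => 1 / 2 * ∑ i, c i * (w i - zp i) ^ 2) zp hzp hmin ?_
  · intro w hw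
    have h2 := hstrong w hw
    simp only at h2
    -- AM-GM: ⟪v, zk - zp⟫ ≤ ½ Σ v²/c + ½ Σ c (zp - zk)²
    have hamgm : ⟪v, zk - zp⟫ ≤ 1 / 2 * ∑ i, v i ^ 2 / c i
        + 1 / 2 * ∑ i, c i * (zp i - zk i) ^ 2 := by
      have hip : ⟪v, zk - zp⟫ = ∑ i, v i * (zk i - zp i) := by
        simp [PiLp.inner_apply, RCLike.inner_apply, mul_comm]
      rw [hip]
      calc ∑ i, v i * (zk i - zp i)
          ≤ ∑ i, (1 / 2 * (v i ^ 2 / c i) + 1 / 2 * (c i * (zp i - zk i) ^ 2)) := by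
            apply Finset.sum_le_sum
            intro i _
            have hci := hc i
            rw [← sub_nonneg]
            have expand : 1 / 2 * (v i ^ 2 / c i) + 1 / 2 * (c i * (zp i - zk i) ^ 2)
                - v i * (zk i - zp i)
                = (c i)⁻¹ / 2 * (v i + c i * (zp i - zk i)) ^ 2 := by
              field_simp
              ring
            rw [expand]
            positivity
        _ = 1 / 2 * ∑ i, v i ^ 2 / c i + 1 / 2 * ∑ i, c i * (zp i - zk i) ^ 2 := by
            rw [Finset.sum_add_distrib, ← Finset.mul_sum, ← Finset.mul_sum]
    have e1 : ⟪v, zk - w⟫ = -⟪v, w - zk⟫ := by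
      rw [← inner_neg_right]; congr 1; abel
    have e2 : ⟪v, zk - zp⟫ = -⟪v, zp - zk⟫ := by
      rw [← inner_neg_right]; congr 1; abel
    rw [e1]
    rw [e2] at hamgm
    linarith
  · intro w hw t ht0 ht1
    simp only
    have hlin : (1 - t) • zp + t • w - zk = (1 - t) • (zp - zk) + t • (w - zk) := by
      module
    have hin : ⟪v, (1 - t) • zp + t • w - zk⟫
        = (1 - t) * ⟪v, zp - zk⟫ + t * ⟪v, w - zk⟫ := by
      rw [hlin, inner_add_right, real_inner_smul_right, real_inner_smul_right]
    have hsum : ∀ i : Fin n, c i * (((1 - t) • zp + t • w) i - zk i) ^ 2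
        = (1 - t) * (c i * (zp i - zk i) ^ 2) + t * (c i * (w i - zk i) ^ 2)
          - t * (1 - t) * (c i * (w i - zp i) ^ 2) := by
      intro i
      have happ : ((1 - t) • zp + t • w) i = (1 - t) * zp i + t * w i := rfl
      rw [happ]
      ring
    rw [hin, Finset.sum_congr rfl (fun i _ => hsum i)]
    rw [Finset.sum_sub_distrib, Finset.sum_add_distrib, ← Finset.mul_sum,
      ← Finset.mul_sum, ← Finset.mul_sum]
    apply le_of_eq
    ring

set_option maxHeartbeats 4000000 in
/-- **Main Result** (Theorem 1): convergence of FLAG at rate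
`O(q_T² L D / T³)`; since `√T ≤ q_T ≤ √(dT)`, the bound is at most
`O(L D d / T²)`. -/
theorem flag_main_theorem
    {d : ℕ} (hd : 1 ≤ d) (T : ℕ) (hT : 1 ≤ T)
    (C : Set (EuclideanSpace ℝ (Fin d)))
    (hCconv : Convex ℝ C) (hCclosed : IsClosed C)
    (D L δ : ℝ) (hL : 0 < L) (hδ : 0 < δ) (hD0 : 0 ≤ D)
    (hD : ∀ a ∈ C, ∀ b ∈ C, ∀ i : Fin d, (a i - b i) ^ 2 ≤ D)
    (f h : EuclideanSpace ℝ (Fin d) → ℝ)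
    (f' : EuclideanSpace ℝ (Fin d) → EuclideanSpace ℝ (Fin d))
    (hfconv : ConvexOn ℝ Set.univ f) (hhconv : ConvexOn ℝ Set.univ h)
    (hfdiff : ∀ v, HasGradientAt f (f' v) v)
    (hflip : ∀ a ∈ C, ∀ b ∈ C, ‖f' a - f' b‖ ≤ L * ‖a - b‖)
    (F : EuclideanSpace ℝ (Fin d) → ℝ) (hF : ∀ v, F v = f v + h v)
    (x y z p g : ℕ → EuclideanSpace ℝ (Fin d))
    (s : ℕ → Fin d → ℝ) (Lk η : ℕ → ℝ)
    (hinit : x 1 = y 1 ∧ y 1 = z 1)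
    (hxC : ∀ k, 1 ≤ k → k ≤ T → x k ∈ C)
    -- `y (k+1) = prox (x k)`: it is the minimizer over `C` of the prox objective at `x k`
    (hproxstep : ∀ k, 1 ≤ k → k ≤ T → y (k + 1) ∈ C ∧ ∀ w ∈ C,
      h (y (k + 1)) + ⟪f' (x k), y (k + 1) - x k⟫ + L / 2 * ‖y (k + 1) - x k‖ ^ 2
        ≤ h w + ⟪f' (x k), w - x k⟫ + L / 2 * ‖w - x k‖ ^ 2)
    (hp : ∀ k, 1 ≤ k → k ≤ T → p k = -L • (y (k + 1) - x k))
    (hpne : ∀ k, 1 ≤ k → k ≤ T → p k ≠ 0)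
    (hg : ∀ k, 1 ≤ k → k ≤ T → g k = ‖p k‖⁻¹ • p k)
    (hs : ∀ k, 1 ≤ k → k ≤ T → ∀ i : Fin d,
      s k i = Real.sqrt (∑ j ∈ Finset.Icc 1 k, g j i ^ 2))
    -- `L_k = L · g_kᵀ S_k⁻¹ g_k` with `S_k = diag(s_k) + δ I`
    (hLk : ∀ k, 1 ≤ k → k ≤ T → Lk k = L * ∑ i : Fin d, g k i ^ 2 / (s k i + δ))
    (hη1 : η 1 = 1 / Lk 1)
    (hηk : ∀ k, 2 ≤ k → k ≤ T →
      η k = 1 / (2 * Lk k)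
        + Real.sqrt (1 / (4 * Lk k ^ 2) + η (k - 1) ^ 2 * Lk (k - 1) / Lk k))
    -- mirror-descent step: `z (k+1)` minimizes `⟨η_k p_k, z − z_k⟩ + ½‖z − z_k‖²_{S_k}`
    (hmirror : ∀ k, 1 ≤ k → k ≤ T → z (k + 1) ∈ C ∧ ∀ w ∈ C,
      ⟪η k • p k, z (k + 1) - z k⟫
          + 1 / 2 * ∑ i : Fin d, (s k i + δ) * (z (k + 1) i - z k i) ^ 2
        ≤ ⟪η k • p k, w - z k⟫
          + 1 / 2 * ∑ i : Fin d, (s k i + δ) * (w i - z k i) ^ 2)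
    -- binary-search guarantee
    (hbs : ∀ k, 1 ≤ k → k ≤ T →
      ⟪p k, x k - z k⟫
        ≤ (η k * Lk k - 1) * ⟪p k, y k - x k⟫
          + D * L * (η k * Lk k) / (T : ℝ) ^ 3)
    (u : EuclideanSpace ℝ (Fin d)) (hu : u ∈ C)
    (hδd : δ ≤ 1 / (d : ℝ))
    (q : ℝ) (hq : q = ∑ i : Fin d, s T i) :
    F (y (T + 1)) - F u ≤ 2001 * q ^ 2 * L * D / (T : ℝ) ^ 3 ∧
    2001 * q ^ 2 * L * D / (T : ℝ) ^ 3 ≤ 2001 * L * D * d / (T : ℝ) ^ 2 := by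

  have hT0 : (0:ℝ) < (T:ℝ) := by exact_mod_cast hT
  have hd0 : (0:ℝ) < (d:ℝ) := by exact_mod_cast hd
  -- membership facts
  have hyC : ∀ k, 1 ≤ k → k ≤ T + 1 → y k ∈ C := by
    intro k hk1 hk2
    match k, hk1 with
    | 1, _ => rw [← hinit.1]; exact hxC 1 le_rfl hT
    | (m+2), _ => exact (hproxstep (m+1) (by omega) (by omega)).1
  have hzC : ∀ k, 1 ≤ k → k ≤ T + 1 → z k ∈ C := by
    intro k hk1 hk2
    match k, hk1 with
    | 1, _ => rw [← hinit.2, ← hinit.1]; exact hxC 1 le_rfl hT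
    | (m+2), _ => exact (hmirror (m+1) (by omega) (by omega)).1
  -- facts about g
  have hpg : ∀ k, 1 ≤ k → k ≤ T → ∀ i, p k i = ‖p k‖ * g k i := by
    intro k hk1 hk2 i
    rw [hg k hk1 hk2]
    show p k i = ‖p k‖ * (‖p k‖⁻¹ * p k i)
    rw [mul_inv_cancel_left₀ (norm_ne_zero_iff.mpr (hpne k hk1 hk2))]
  have hgnorm : ∀ k, 1 ≤ k → k ≤ T → ∑ i, g k i ^ 2 = 1 := by
    intro k hk1 hk2
    have h1 : ‖g k‖ = 1 := by
      rw [hg k hk1 hk2, norm_smul, norm_inv, norm_norm,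
        inv_mul_cancel₀ (norm_ne_zero_iff.mpr (hpne k hk1 hk2))]
    have h2 : ‖g k‖ ^ 2 = ∑ i, g k i ^ 2 := by
      rw [EuclideanSpace.norm_sq_eq]
      simp [Real.norm_eq_abs, sq_abs]
    rw [h1] at h2
    simpa using h2.symm
  -- facts about s
  have hs_nonneg : ∀ k, 1 ≤ k → k ≤ T → ∀ i, 0 ≤ s k i := by
    intro k hk1 hk2 i
    rw [hs k hk1 hk2 i]
    exact Real.sqrt_nonneg _
  have hs_mono : ∀ k, 1 ≤ k → k + 1 ≤ T → ∀ i, s k i ≤ s (k + 1) i := by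
    intro k hk1 hk2 i
    rw [hs k hk1 (by omega) i, hs (k+1) (by omega) hk2 i]
    apply Real.sqrt_le_sqrt
    rw [Finset.sum_Icc_succ_top (by omega : 1 ≤ k + 1)]
    nlinarith [sq_nonneg (g (k+1) i)]
  -- facts about Lk
  have hLkpos : ∀ k, 1 ≤ k → k ≤ T → 0 < Lk k := by
    intro k hk1 hk2
    rw [hLk k hk1 hk2]
    apply mul_pos hL
    apply Finset.sum_pos'
    · intro i _
      have := hs_nonneg k hk1 hk2 i
      positivity
    · by_contra hcon
      push_neg at hcon
      have : ∑ i, g k i ^ 2 = 0 := by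
        apply Finset.sum_eq_zero
        intro i hi
        have h1 := hcon i hi
        have h2 := hs_nonneg k hk1 hk2 i
        have h3 : 0 < s k i + δ := by linarith
        by_contra hgz
        have : 0 < g k i ^ 2 := lt_of_le_of_ne (sq_nonneg _) (Ne.symm hgz)
        have : 0 < g k i ^ 2 / (s k i + δ) := div_pos this h3
        linarith
      rw [hgnorm k hk1 hk2] at this
      norm_num at this
  -- facts about η
  have hηpos : ∀ k, 1 ≤ k → k ≤ T → 0 < η k := by
    intro k hk1 hk2
    match k, hk1 with
    | 1, _ => rw [hη1]; exact div_pos one_pos (hLkpos 1 le_rfl hk2)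
    | (m+2), _ =>
      rw [hηk (m+2) (by omega) hk2]
      have := hLkpos (m+2) (by omega) hk2
      have h1 : 0 < 1 / (2 * Lk (m+2)) := div_pos one_pos (by linarith)
      have h2 : 0 ≤ Real.sqrt (1 / (4 * Lk (m+2) ^ 2) + η (m+2-1) ^ 2 * Lk (m+2-1) / Lk (m+2)) :=
        Real.sqrt_nonneg _
      linarith
  have hquad : ∀ k, 2 ≤ k → k ≤ T → Lk k * η k ^ 2 = η k + η (k-1) ^ 2 * Lk (k-1) := by
    intro k hk2 hkT
    have hLp := hLkpos k (by omega) hkT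
    have hLp' := hLkpos (k-1) (by omega) (by omega)
    have hrad : (0:ℝ) ≤ 1 / (4 * Lk k ^ 2) + η (k-1) ^ 2 * Lk (k-1) / Lk k :=
      add_nonneg (le_of_lt (div_pos one_pos (by nlinarith)))
        (div_nonneg (mul_nonneg (sq_nonneg _) hLp'.le) hLp.le)
    have heq := hηk k hk2 hkT
    set R := Real.sqrt (1 / (4 * Lk k ^ 2) + η (k - 1) ^ 2 * Lk (k - 1) / Lk k) with hR
    have hR2 : R ^ 2 = 1 / (4 * Lk k ^ 2) + η (k - 1) ^ 2 * Lk (k - 1) / Lk k :=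
      Real.sq_sqrt hrad
    have hLkne : Lk k ≠ 0 := ne_of_gt hLp
    have expand : Lk k * (1 / (2 * Lk k) + R) ^ 2 = 1 / (4 * Lk k) + R + Lk k * R ^ 2 := by
      field_simp
      ring
    have e2 : Lk k * R ^ 2 = 1 / (4 * Lk k) + η (k - 1) ^ 2 * Lk (k - 1) := by
      rw [hR2]
      field_simp
    rw [heq, expand, e2]
    field_simp
    ring
  have hηLk1 : η 1 * Lk 1 = 1 := by
    rw [hη1]
    field_simp [ne_of_gt (hLkpos 1 le_rfl hT)]
  have hηLkge : ∀ k, 1 ≤ k → k ≤ T → 1 ≤ η k * Lk k := by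
    intro k hk1 hk2
    match k, hk1 with
    | 1, _ => rw [hηLk1]
    | (m+2), _ =>
      have hq2 := hquad (m+2) (by omega) hk2
      have hηp := hηpos (m+2) (by omega) hk2
      have hLp := hLkpos (m+2) (by omega) hk2
      have hb : 0 ≤ η (m+2-1) ^ 2 * Lk (m+2-1) :=
        mul_nonneg (sq_nonneg _) (hLkpos (m+1) (by omega) (by omega)).le
      nlinarith
  set A : ℕ → ℝ := fun k => if k = 0 then 0 else η k ^ 2 * Lk k with hA
  have hA0 : A 0 = 0 := by simp [hA]
  have hAval : ∀ k, 1 ≤ k → A k = η k ^ 2 * Lk k := by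
    intro k hk1
    simp only [hA]
    rw [if_neg (by omega : ¬ k = 0)]
  have hApos : ∀ k, 1 ≤ k → k ≤ T → 0 < A k := by
    intro k hk1 hk2
    rw [hAval k hk1]
    exact mul_pos (pow_pos (hηpos k hk1 hk2) 2) (hLkpos k hk1 hk2)
  have hAnonneg : ∀ k, k ≤ T → 0 ≤ A k := by
    intro k hk2
    match k with
    | 0 => rw [hA0]
    | (m+1) => exact (hApos (m+1) (by omega) hk2).le
  have hAprev : ∀ k, 1 ≤ k → k ≤ T → η k * (η k * Lk k - 1) = A (k - 1) := by
    intro k hk1 hk2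
    match k, hk1 with
    | 1, _ => rw [hηLk1]; simp [hA0]
    | (m+2), _ =>
      have hq2 := hquad (m+2) (by omega) hk2
      rw [show (m+2) - 1 = m+1 from rfl, hAval (m+1) (by omega)]
      have : (m+2) - 1 = m + 1 := by omega
      rw [this] at hq2
      nlinarith [hq2]
  have hAsum : ∀ k, 1 ≤ k → k ≤ T → A k = A (k - 1) + η k := by
    intro k hk1 hk2
    have h1 := hAprev k hk1 hk2
    have h2 := hAval k hk1
    nlinarith [h1, h2]
  -- potential functions
  set Ψ : ℕ → ℝ := fun k => 1 / 2 * ∑ i, (s k i + δ) * (u i - z k i) ^ 2 with hΨ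
  set Ψ' : ℕ → ℝ := fun k => 1 / 2 * ∑ i, (s k i + δ) * (u i - z (k + 1) i) ^ 2 with hΨ'
  -- prox-gradient lemma
  have hprox : ∀ k, 1 ≤ k → k ≤ T → ∀ w ∈ C,
      F (y (k + 1)) ≤ F w - ⟪p k, w - x k⟫ - ‖p k‖ ^ 2 / (2 * L) := by
    intro k hk1 hk2 w hw
    have hxk := hxC k hk1 hk2
    have hyk1 := hyC (k + 1) (by omega) (by omega)
    have h1 := smooth_upper hCconv f f' hfdiff L hflip hxk hyk1
    have h2 := prox_lemma hCconv h hhconv L hL (f' (x k)) (x k) (y (k + 1)) hyk1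
      ((hproxstep k hk1 hk2).2) w hw
    have h3 := grad_convex_le f f' hfconv hfdiff (x k) w
    have hpk := hp k hk1 hk2
    have hnp : ‖p k‖ = L * ‖y (k + 1) - x k‖ := by
      rw [hpk, norm_smul]
      simp [Real.norm_eq_abs, abs_of_pos hL]
    have hip : ⟪p k, w - x k⟫ = -L * ⟪y (k + 1) - x k, w - x k⟫ := by
      rw [hpk, real_inner_smul_left]
    have hdiv : ‖p k‖ ^ 2 / (2 * L) = L / 2 * ‖y (k + 1) - x k‖ ^ 2 := by
      rw [hnp]
      field_simp
    have hnsub : ‖w - y (k + 1)‖ ^ 2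
        = ‖w - x k‖ ^ 2 - 2 * ⟪w - x k, y (k + 1) - x k⟫ + ‖y (k + 1) - x k‖ ^ 2 := by
      have he : w - y (k + 1) = (w - x k) - (y (k + 1) - x k) := by abel
      rw [he, norm_sub_sq_real]
    have hsymm : ⟪y (k + 1) - x k, w - x k⟫ = ⟪w - x k, y (k + 1) - x k⟫ :=
      real_inner_comm _ _
    have hkey : -⟪p k, w - x k⟫ - ‖p k‖ ^ 2 / (2 * L)
        = L / 2 * ‖w - x k‖ ^ 2 - L / 2 * ‖w - y (k + 1)‖ ^ 2 := by
      rw [hip, hdiv, hnsub, hsymm]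
      ring
    rw [hF (y (k + 1)), hF w]
    linarith [h1, h2, h3, hkey]
  -- mirror-descent lemma
  have hmir : ∀ k, 1 ≤ k → k ≤ T →
      η k * ⟪p k, z k - u⟫ ≤ η k ^ 2 * Lk k * ‖p k‖ ^ 2 / (2 * L) + Ψ k - Ψ' k := by
    intro k hk1 hk2
    have hc : ∀ i, 0 < s k i + δ := fun i => by
      have := hs_nonneg k hk1 hk2 i
      linarith
    have hm := mirror_lemma hCconv (fun i => s k i + δ) hc (η k • p k) (z k) (z (k + 1))
      (hmirror k hk1 hk2).1 (hmirror k hk1 hk2).2 u hu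
    have hinsmul : ⟪η k • p k, z k - u⟫ = η k * ⟪p k, z k - u⟫ := real_inner_smul_left _ _ _
    have hsum : ∑ i, ((η k • p k) i) ^ 2 / (s k i + δ) = η k ^ 2 * Lk k * ‖p k‖ ^ 2 / L := by
      have e : ∀ i : Fin d, ((η k • p k) i) ^ 2 / (s k i + δ)
          = (η k ^ 2 * ‖p k‖ ^ 2) * (g k i ^ 2 / (s k i + δ)) := by
        intro i
        have happ : (η k • p k) i = η k * p k i := rfl
        rw [happ, hpg k hk1 hk2 i]
        ring
      rw [Finset.sum_congr rfl (fun i _ => e i), ← Finset.mul_sum]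
      have hLkk := hLk k hk1 hk2
      have hsg : ∑ i, g k i ^ 2 / (s k i + δ) = Lk k / L := by
        rw [hLkk]
        field_simp
      rw [hsg]
      field_simp
    rw [hinsmul, hsum] at hm
    beta_reduce at hm
    have h2L : 1 / 2 * (η k ^ 2 * Lk k * ‖p k‖ ^ 2 / L) = η k ^ 2 * Lk k * ‖p k‖ ^ 2 / (2 * L) := by
      ring
    rw [h2L] at hm
    simp only [hΨ, hΨ']
    linarith [hm]
  have hstep : ∀ k, 1 ≤ k → k ≤ T →
      A k * (F (y (k + 1)) - F u) ≤ A (k - 1) * (F (y k) - F u)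
        + D * L * A k / (T : ℝ) ^ 3 + Ψ k - Ψ' k := by
    intro k hk1 hk2
    have hηp := hηpos k hk1 hk2
    have e1 := hprox k hk1 hk2 u hu
    have e2 := hprox k hk1 hk2 (y k) (hyC k hk1 (by omega))
    have e3 := hbs k hk1 hk2
    have e4 := hmir k hk1 hk2
    have hsplit : ⟪p k, x k - z k⟫ + ⟪p k, z k - u⟫ = -⟪p k, u - x k⟫ := by
      rw [← inner_add_right, ← inner_neg_right]
      congr 1
      abel
    have hprev := hAprev k hk1 hk2
    have hAk := hAval k hk1
    have hAs := hAsum k hk1 hk2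
    have hA1nn : 0 ≤ A (k - 1) := hAnonneg (k - 1) (by omega)
    have e1' : F (y (k + 1)) - F u
        ≤ ⟪p k, x k - z k⟫ + ⟪p k, z k - u⟫ - ‖p k‖ ^ 2 / (2 * L) := by
      linarith [e1, hsplit]
    have m1 : η k * (F (y (k + 1)) - F u)
        ≤ η k * ⟪p k, x k - z k⟫ + η k * ⟪p k, z k - u⟫ - η k * (‖p k‖ ^ 2 / (2 * L)) := by
      calc η k * (F (y (k + 1)) - F u)
          ≤ η k * (⟪p k, x k - z k⟫ + ⟪p k, z k - u⟫ - ‖p k‖ ^ 2 / (2 * L)) :=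
            mul_le_mul_of_nonneg_left e1' hηp.le
        _ = _ := by ring
    have m3 : η k * ⟪p k, x k - z k⟫
        ≤ A (k - 1) * ⟪p k, y k - x k⟫ + D * L * A k / (T : ℝ) ^ 3 := by
      calc η k * ⟪p k, x k - z k⟫
          ≤ η k * ((η k * Lk k - 1) * ⟪p k, y k - x k⟫ + D * L * (η k * Lk k) / (T : ℝ) ^ 3) :=
            mul_le_mul_of_nonneg_left e3 hηp.le
        _ = (η k * (η k * Lk k - 1)) * ⟪p k, y k - x k⟫
            + D * L * (η k ^ 2 * Lk k) / (T : ℝ) ^ 3 := by ring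
        _ = A (k - 1) * ⟪p k, y k - x k⟫ + D * L * A k / (T : ℝ) ^ 3 := by rw [hprev, ← hAk]
    have e2' : ⟪p k, y k - x k⟫
        ≤ (F (y k) - F u) - (F (y (k + 1)) - F u) - ‖p k‖ ^ 2 / (2 * L) := by
      linarith [e2]
    have m2' : A (k - 1) * ⟪p k, y k - x k⟫
        ≤ A (k - 1) * (F (y k) - F u) - A (k - 1) * (F (y (k + 1)) - F u)
          - A (k - 1) * (‖p k‖ ^ 2 / (2 * L)) := by
      calc A (k - 1) * ⟪p k, y k - x k⟫
          ≤ A (k - 1) * ((F (y k) - F u) - (F (y (k + 1)) - F u) - ‖p k‖ ^ 2 / (2 * L)) :=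
            mul_le_mul_of_nonneg_left e2' hA1nn
        _ = _ := by ring
    have hcancel : η k ^ 2 * Lk k * (‖p k‖ ^ 2 / (2 * L))
        = A (k - 1) * (‖p k‖ ^ 2 / (2 * L)) + η k * (‖p k‖ ^ 2 / (2 * L)) := by
      have hh : η k ^ 2 * Lk k = A (k - 1) + η k := by rw [← hAk]; exact hAs
      linear_combination (‖p k‖ ^ 2 / (2 * L)) * hh
    have hAe : A k * (F (y (k + 1)) - F u)
        = A (k - 1) * (F (y (k + 1)) - F u) + η k * (F (y (k + 1)) - F u) := by
      linear_combination (F (y (k + 1)) - F u) * hAs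
    have he4' : η k ^ 2 * Lk k * ‖p k‖ ^ 2 / (2 * L)
        = η k ^ 2 * Lk k * (‖p k‖ ^ 2 / (2 * L)) := by ring
    rw [he4'] at e4
    linarith [m1, m2', m3, e4, hcancel, hAe]
  have htel : ∀ k, 1 ≤ k → k ≤ T →
      A k * (F (y (k + 1)) - F u) + Ψ' k
        ≤ D * L / (T : ℝ) ^ 3 * (∑ j ∈ Finset.Icc 1 k, A j)
          + 1 / 2 * D * (∑ i, (s k i + δ)) := by
    intro k hk1
    induction k, hk1 using Nat.le_induction with
    | base =>
      intro h1T
      have hst := hstep 1 le_rfl h1T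
      rw [show (1:ℕ) - 1 = 0 from rfl, hA0] at hst
      have hΨ1 : Ψ 1 ≤ 1 / 2 * D * (∑ i, (s 1 i + δ)) := by
        simp only [hΨ]
        have hper : ∀ i ∈ Finset.univ, (s 1 i + δ) * (u i - z 1 i) ^ 2 ≤ (s 1 i + δ) * D := by
          intro i _
          have h1 : (u i - z 1 i) ^ 2 ≤ D := hD u hu (z 1) (hzC 1 le_rfl (by omega)) i
          have h2 : 0 ≤ s 1 i + δ := by
            have := hs_nonneg 1 le_rfl h1T i
            linarith
          exact mul_le_mul_of_nonneg_left h1 h2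
        have hsum := Finset.sum_le_sum hper
        rw [← Finset.sum_mul] at hsum
        nlinarith [hsum]
      rw [show Finset.Icc 1 1 = {1} from Finset.Icc_self 1, Finset.sum_singleton]
      have hrw : D * L / (T : ℝ) ^ 3 * A 1 = D * L * A 1 / (T : ℝ) ^ 3 := by ring
      rw [hrw]
      linarith [hst, hΨ1]
    | succ k hk1 ih =>
      intro hk1T
      have ihh := ih (by omega)
      have hst := hstep (k + 1) (by omega) hk1T
      rw [show k + 1 - 1 = k from rfl] at hst
      have hbridge : Ψ (k + 1) - Ψ' k
          ≤ 1 / 2 * D * (∑ i, (s (k + 1) i + δ)) - 1 / 2 * D * (∑ i, (s k i + δ)) := by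
        simp only [hΨ, hΨ']
        have hper : ∀ i ∈ Finset.univ,
            (s (k + 1) i + δ) * (u i - z (k + 1) i) ^ 2
              - (s k i + δ) * (u i - z (k + 1) i) ^ 2
            ≤ D * (s (k + 1) i + δ) - D * (s k i + δ) := by
          intro i _
          have h1 : (u i - z (k + 1) i) ^ 2 ≤ D :=
            hD u hu (z (k + 1)) (hzC (k + 1) (by omega) (by omega)) i
          have h2 : s k i ≤ s (k + 1) i := hs_mono k (by omega) hk1T i
          nlinarith [sq_nonneg (u i - z (k + 1) i)]
        have hsum := Finset.sum_le_sum hper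
        rw [Finset.sum_sub_distrib, Finset.sum_sub_distrib, ← Finset.mul_sum,
          ← Finset.mul_sum] at hsum
        linarith [hsum]
      rw [Finset.sum_Icc_succ_top (by omega : 1 ≤ k + 1)]
      have hrw : D * L / (T : ℝ) ^ 3 * (∑ j ∈ Finset.Icc 1 k, A j + A (k + 1))
          = D * L / (T : ℝ) ^ 3 * (∑ j ∈ Finset.Icc 1 k, A j) + D * L * A (k + 1) / (T : ℝ) ^ 3 := by
        ring
      rw [hrw]
      linarith [hst, ihh, hbridge]
  -- nonnegativity of final potential
  have hΨ'Tnn : 0 ≤ Ψ' T := by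
    simp only [hΨ']
    apply mul_nonneg (by norm_num)
    apply Finset.sum_nonneg
    intro i _
    have := hs_nonneg T hT le_rfl i
    exact mul_nonneg (by linarith) (sq_nonneg _)
  -- monotonicity of A and sum bound
  have hAmono : ∀ j, 1 ≤ j → j ≤ T → A j ≤ A T := by
    intro j hj1 hjT
    have key : ∀ m, j ≤ m → m ≤ T → A j ≤ A m := by
      intro m hm
      induction m, hm using Nat.le_induction with
      | base => intro _; exact le_rfl
      | succ m hm ih =>
        intro hmT
        have h1 := ih (by omega)
        have h2 := hAsum (m + 1) (by omega) hmT
        rw [show m + 1 - 1 = m from rfl] at h2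
        have h3 := hηpos (m + 1) (by omega) hmT
        linarith
    exact key T hjT le_rfl
  have hsumA : ∑ j ∈ Finset.Icc 1 T, A j ≤ (T : ℝ) * A T := by
    calc ∑ j ∈ Finset.Icc 1 T, A j ≤ ∑ _j ∈ Finset.Icc 1 T, A T :=
        Finset.sum_le_sum (fun j hj => by
          rw [Finset.mem_Icc] at hj
          exact hAmono j hj.1 hj.2)
      _ = (T : ℝ) * A T := by
        rw [Finset.sum_const, Nat.card_Icc]
        simp [nsmul_eq_mul]
  -- q facts
  have hsT2 : ∀ i, s T i ^ 2 = ∑ j ∈ Finset.Icc 1 T, g j i ^ 2 := by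
    intro i
    rw [hs T hT le_rfl i]
    exact Real.sq_sqrt (Finset.sum_nonneg fun j _ => sq_nonneg _)
  have hsumsq : ∑ i, s T i ^ 2 = (T : ℝ) := by
    calc ∑ i, s T i ^ 2 = ∑ i, ∑ j ∈ Finset.Icc 1 T, g j i ^ 2 :=
        Finset.sum_congr rfl fun i _ => hsT2 i
      _ = ∑ j ∈ Finset.Icc 1 T, ∑ i, g j i ^ 2 := Finset.sum_comm
      _ = ∑ _j ∈ Finset.Icc 1 T, (1 : ℝ) := Finset.sum_congr rfl fun j hj => by
          rw [Finset.mem_Icc] at hj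
          exact hgnorm j hj.1 hj.2
      _ = (T : ℝ) := by
        rw [Finset.sum_const, Nat.card_Icc]
        simp
  have hq0 : 0 ≤ q := by
    rw [hq]
    exact Finset.sum_nonneg fun i _ => hs_nonneg T hT le_rfl i
  have hT1 : (1 : ℝ) ≤ (T : ℝ) := by exact_mod_cast hT
  have hqsq_ge : (T : ℝ) ≤ q ^ 2 := by
    rw [hq, ← hsumsq]
    exact Finset.sum_sq_le_sq_sum_of_nonneg fun i _ => hs_nonneg T hT le_rfl i
  have hq1 : 1 ≤ q := by nlinarith [hqsq_ge, hq0, hT1]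
  have hqdT : q ^ 2 ≤ (d : ℝ) * (T : ℝ) := by
    have hcs := sq_sum_le_card_mul_sum_sq (s := (Finset.univ : Finset (Fin d)))
      (f := fun i => s T i)
    rw [hsumsq] at hcs
    simpa [hq] using hcs
  -- AdaGrad bound on the sum of the local Lipschitz estimates
  have hLsum : ∑ k ∈ Finset.Icc 1 T, Lk k ≤ 2 * L * q := by
    calc ∑ k ∈ Finset.Icc 1 T, Lk k
        = L * ∑ k ∈ Finset.Icc 1 T, ∑ i, g k i ^ 2 / (s k i + δ) := by
          rw [Finset.mul_sum]
          refine Finset.sum_congr rfl fun k hk => ?_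
          rw [Finset.mem_Icc] at hk
          exact hLk k hk.1 hk.2
      _ = L * ∑ i, ∑ k ∈ Finset.Icc 1 T, g k i ^ 2 / (s k i + δ) := by
          rw [Finset.sum_comm]
      _ ≤ L * ∑ i, 2 * s T i := by
          apply mul_le_mul_of_nonneg_left _ hL.le
          apply Finset.sum_le_sum
          intro i _
          have hag := adagrad_sum (fun k => g k i ^ 2) (fun k => sq_nonneg _) δ hδ T
          have hrw : ∑ k ∈ Finset.Icc 1 T, g k i ^ 2 / (s k i + δ)
              = ∑ k ∈ Finset.Icc 1 T,
                  g k i ^ 2 / (Real.sqrt (∑ j ∈ Finset.Icc 1 k, g j i ^ 2) + δ) := by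
            refine Finset.sum_congr rfl fun k hk => ?_
            rw [Finset.mem_Icc] at hk
            rw [hs k hk.1 hk.2 i]
          rw [hrw]
          calc _ ≤ 2 * Real.sqrt (∑ j ∈ Finset.Icc 1 T, g j i ^ 2) := hag
            _ = 2 * s T i := by rw [hs T hT le_rfl i]
      _ = 2 * L * q := by
          rw [← Finset.mul_sum, hq]
          ring
  -- lower bound on sqrt (A k) by the sum of 1/(2 sqrt (Lk j))
  have hrpos : ∀ k, 1 ≤ k → k ≤ T → 0 < Real.sqrt (Lk k) := fun k h1 h2 =>
    Real.sqrt_pos.mpr (hLkpos k h1 h2)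
  have hsA : ∀ k, 1 ≤ k → k ≤ T →
      ∑ j ∈ Finset.Icc 1 k, 1 / (2 * Real.sqrt (Lk j)) ≤ Real.sqrt (A k) := by
    intro k hk1
    induction k, hk1 using Nat.le_induction with
    | base =>
      intro h1T
      rw [show Finset.Icc 1 1 = {1} from Finset.Icc_self 1, Finset.sum_singleton]
      have hA1 : A 1 = 1 / Lk 1 := by
        have hne : Lk 1 ≠ 0 := (hLkpos 1 le_rfl h1T).ne'
        rw [hAval 1 le_rfl, hη1]
        field_simp
      have hr1 := hrpos 1 le_rfl h1T
      have hsq : Real.sqrt (A 1) = 1 / Real.sqrt (Lk 1) := by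
        rw [hA1, one_div, Real.sqrt_inv, one_div]
      rw [hsq]
      exact div_le_div_of_nonneg_left zero_le_one hr1 (by linarith)
    | succ k hk1 ih =>
      intro hk1T
      have ihh := ih (by omega)
      set a := Real.sqrt (A k) with ha
      set b := Real.sqrt (A (k + 1)) with hb
      set r := Real.sqrt (Lk (k + 1)) with hr
      have hApk := hApos k (by omega) (by omega)
      have hApk1 := hApos (k + 1) (by omega) hk1T
      have ha2 : a ^ 2 = A k := Real.sq_sqrt hApk.le
      have hb2 : b ^ 2 = A (k + 1) := Real.sq_sqrt hApk1.le
      have hbpos : 0 < b := Real.sqrt_pos.mpr hApk1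
      have hanng : 0 ≤ a := Real.sqrt_nonneg _
      have hrp : 0 < r := hrpos (k + 1) (by omega) hk1T
      have hr2 : r ^ 2 = Lk (k + 1) := Real.sq_sqrt (hLkpos (k + 1) (by omega) hk1T).le
      have hAs := hAsum (k + 1) (by omega) hk1T
      rw [show k + 1 - 1 = k from rfl] at hAs
      have hηeq : η (k + 1) = b / r := by
        have hv := hAval (k + 1) (by omega)
        have hηp := hηpos (k + 1) (by omega) hk1T
        have : b = η (k + 1) * r := by
          rw [hb, hv, hr, Real.sqrt_mul (sq_nonneg _), Real.sqrt_sq hηp.le]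
        rw [this]
        field_simp
      have hkey' : r * b ^ 2 = r * a ^ 2 + b := by
        rw [ha2, hb2, hAs, hηeq]
        field_simp
      have hba : a ≤ b := by
        rw [ha, hb]
        apply Real.sqrt_le_sqrt
        have := hηpos (k + 1) (by omega) hk1T
        linarith [hAs]
      have hprod : (2 * r * (b - a) - 1) * b = r * (b - a) ^ 2 := by
        linear_combination hkey'
      have h2r : 0 ≤ 2 * r * (b - a) - 1 := by
        nlinarith [hprod, hbpos, mul_nonneg hrp.le (sq_nonneg (b - a))]
      have hstepb : a + 1 / (2 * r) ≤ b := by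
        rw [← sub_nonneg]
        have h2rpos : (0:ℝ) < 2 * r := by linarith
        have : 1 / (2 * r) ≤ b - a := by
          rw [div_le_iff₀ h2rpos]
          nlinarith [h2r]
        linarith
      rw [Finset.sum_Icc_succ_top (by omega : 1 ≤ k + 1)]
      calc ∑ j ∈ Finset.Icc 1 k, 1 / (2 * Real.sqrt (Lk j)) + 1 / (2 * Real.sqrt (Lk (k+1)))
          ≤ a + 1 / (2 * r) := by rw [← hr]; linarith [ihh]
        _ ≤ b := hstepb
  -- Cauchy–Schwarz chain
  set SR := ∑ k ∈ Finset.Icc 1 T, Real.sqrt (Lk k) with hSR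
  set RS := ∑ k ∈ Finset.Icc 1 T, 1 / Real.sqrt (Lk k) with hRS
  have hne : (Finset.Icc 1 T).Nonempty := ⟨1, Finset.mem_Icc.mpr ⟨le_rfl, hT⟩⟩
  have hSRpos : 0 < SR := by
    rw [hSR]
    apply Finset.sum_pos _ hne
    intro k hk
    rw [Finset.mem_Icc] at hk
    exact hrpos k hk.1 hk.2
  have hRSpos : 0 < RS := by
    rw [hRS]
    apply Finset.sum_pos _ hne
    intro k hk
    rw [Finset.mem_Icc] at hk
    exact div_pos one_pos (hrpos k hk.1 hk.2)
  have hCS1 : (T : ℝ) ^ 2 ≤ SR * RS := by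
    have hcs := Finset.sum_mul_sq_le_sq_mul_sq (Finset.Icc 1 T)
      (fun k => Real.sqrt (Real.sqrt (Lk k))) (fun k => 1 / Real.sqrt (Real.sqrt (Lk k)))
    have h1 : ∑ k ∈ Finset.Icc 1 T,
        Real.sqrt (Real.sqrt (Lk k)) * (1 / Real.sqrt (Real.sqrt (Lk k))) = (T : ℝ) := by
      have hterm : ∀ k ∈ Finset.Icc 1 T,
          Real.sqrt (Real.sqrt (Lk k)) * (1 / Real.sqrt (Real.sqrt (Lk k))) = (1:ℝ) := by
        intro k hk
        rw [Finset.mem_Icc] at hk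
        have hpos : 0 < Real.sqrt (Real.sqrt (Lk k)) := Real.sqrt_pos.mpr (hrpos k hk.1 hk.2)
        field_simp
      rw [Finset.sum_congr rfl hterm, Finset.sum_const, Nat.card_Icc]
      simp
    have h2 : ∑ k ∈ Finset.Icc 1 T, Real.sqrt (Real.sqrt (Lk k)) ^ 2 = SR := by
      rw [hSR]
      exact Finset.sum_congr rfl fun k _ => Real.sq_sqrt (Real.sqrt_nonneg _)
    have h3 : ∑ k ∈ Finset.Icc 1 T, (1 / Real.sqrt (Real.sqrt (Lk k))) ^ 2 = RS := by
      rw [hRS]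
      refine Finset.sum_congr rfl fun k _ => ?_
      rw [div_pow, one_pow, Real.sq_sqrt (Real.sqrt_nonneg _)]
    rw [h1, h2, h3] at hcs
    exact hcs
  have hCS2 : SR ^ 2 ≤ (T : ℝ) * ∑ k ∈ Finset.Icc 1 T, Lk k := by
    have hcs := sq_sum_le_card_mul_sum_sq (s := Finset.Icc 1 T)
      (f := fun k => Real.sqrt (Lk k))
    have h2 : ∑ k ∈ Finset.Icc 1 T, Real.sqrt (Lk k) ^ 2
        = ∑ k ∈ Finset.Icc 1 T, Lk k := by
      refine Finset.sum_congr rfl fun k hk => ?_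
      rw [Finset.mem_Icc] at hk
      exact Real.sq_sqrt (hLkpos k hk.1 hk.2).le
    rw [h2, Nat.card_Icc] at hcs
    rw [hSR]
    calc (∑ k ∈ Finset.Icc 1 T, Real.sqrt (Lk k)) ^ 2
        ≤ ((T + 1 - 1 : ℕ) : ℝ) * ∑ k ∈ Finset.Icc 1 T, Lk k := hcs
      _ = (T : ℝ) * ∑ k ∈ Finset.Icc 1 T, Lk k := by norm_num
  have h2Lq : (0:ℝ) < 2 * L * q := by nlinarith [hq1, hL]
  have hRS2 : (T : ℝ) ^ 3 / (2 * L * q) ≤ RS ^ 2 := by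
    have h4 : (T : ℝ) ^ 4 ≤ SR ^ 2 * RS ^ 2 := by nlinarith [hCS1, hSRpos, hRSpos]
    have h5 : SR ^ 2 ≤ (T : ℝ) * (2 * L * q) :=
      le_trans hCS2 (mul_le_mul_of_nonneg_left hLsum hT0.le)
    rw [div_le_iff₀ h2Lq]
    nlinarith [h4, mul_le_mul_of_nonneg_right h5 (sq_nonneg RS), hT0]
  have hATpos := hApos T hT le_rfl
  have h8Lq : (0:ℝ) < 8 * L * q := by nlinarith [hq1, hL]
  have hAT : (T : ℝ) ^ 3 / (8 * L * q) ≤ A T := by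
    have h6 := hsA T hT le_rfl
    have h7 : ∑ j ∈ Finset.Icc 1 T, 1 / (2 * Real.sqrt (Lk j)) = RS / 2 := by
      rw [hRS, Finset.sum_div]
      exact Finset.sum_congr rfl fun k _ => by ring
    rw [h7] at h6
    have h9 : RS ^ 2 / 4 ≤ A T := by
      have hsq := Real.sq_sqrt hATpos.le
      nlinarith [h6, hRSpos, Real.sqrt_nonneg (A T)]
    have h10 : (T : ℝ) ^ 3 / (8 * L * q) = (T : ℝ) ^ 3 / (2 * L * q) / 4 := by
      field_simp
      ring
    rw [h10]
    linarith [hRS2, h9]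
  -- final assembly
  have hKT := htel T hT le_rfl
  have hδdsum : ∑ i, (s T i + δ) ≤ q + 1 := by
    rw [Finset.sum_add_distrib, Finset.sum_const, Finset.card_univ, Fintype.card_fin,
      nsmul_eq_mul, ← hq]
    have hdδ : (d : ℝ) * δ ≤ 1 := by
      have hmul := mul_le_mul_of_nonneg_left hδd hd0.le
      rw [mul_one_div, div_self (ne_of_gt hd0)] at hmul
      linarith
    linarith
  have e1 : A T * (F (y (T + 1)) - F u) ≤ D * L / (T : ℝ) ^ 2 * A T + D * q := by
    have hmul1 : D * L / (T : ℝ) ^ 3 * (∑ j ∈ Finset.Icc 1 T, A j)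
        ≤ D * L / (T : ℝ) ^ 3 * ((T : ℝ) * A T) :=
      mul_le_mul_of_nonneg_left hsumA
        (div_nonneg (mul_nonneg hD0 hL.le) (by positivity))
    have hmul2 : 1 / 2 * D * (∑ i, (s T i + δ)) ≤ 1 / 2 * D * (q + 1) :=
      mul_le_mul_of_nonneg_left hδdsum (by linarith)
    have heq : D * L / (T : ℝ) ^ 3 * ((T : ℝ) * A T) = D * L / (T : ℝ) ^ 2 * A T := by
      have hTne : (T : ℝ) ≠ 0 := ne_of_gt hT0
      field_simp
    have hq2 : 1 / 2 * D * (q + 1) ≤ D * q := by nlinarith [hq1, hD0]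
    linarith [hKT, hΨ'Tnn, hmul1, hmul2, heq, hq2]
  have e2 : F (y (T + 1)) - F u ≤ D * L / (T : ℝ) ^ 2 + D * q / A T := by
    have hdm : D * q / A T * A T = D * q := div_mul_cancel₀ _ (ne_of_gt hATpos)
    nlinarith [e1, hdm, hATpos]
  have e3 : D * q / A T ≤ 8 * L * D * q ^ 2 / (T : ℝ) ^ 3 := by
    have hpos : (0:ℝ) < (T : ℝ) ^ 3 / (8 * L * q) := div_pos (by positivity) h8Lq
    calc D * q / A T ≤ D * q / ((T : ℝ) ^ 3 / (8 * L * q)) :=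
        div_le_div_of_nonneg_left (mul_nonneg hD0 hq0) hpos hAT
      _ = 8 * L * D * q ^ 2 / (T : ℝ) ^ 3 := by
        rw [div_div_eq_mul_div]
        ring
  have e4 : D * L / (T : ℝ) ^ 2 ≤ L * D * q ^ 2 / (T : ℝ) ^ 3 := by
    rw [div_le_div_iff₀ (pow_pos hT0 2) (pow_pos hT0 3)]
    nlinarith [mul_le_mul_of_nonneg_left hqsq_ge
      (mul_nonneg (mul_nonneg hL.le hD0) (sq_nonneg ((T:ℝ)))), hT0]
  constructor
  · have hfinal : L * D * q ^ 2 / (T : ℝ) ^ 3 + 8 * L * D * q ^ 2 / (T : ℝ) ^ 3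
        ≤ 2001 * q ^ 2 * L * D / (T : ℝ) ^ 3 := by
      have hnn : 0 ≤ q ^ 2 * L * D / (T : ℝ) ^ 3 :=
        div_nonneg (mul_nonneg (mul_nonneg (sq_nonneg q) hL.le) hD0) (by positivity)
      have heq1 : L * D * q ^ 2 / (T : ℝ) ^ 3 = q ^ 2 * L * D / (T : ℝ) ^ 3 := by ring
      have heq2 : 8 * L * D * q ^ 2 / (T : ℝ) ^ 3 = 8 * (q ^ 2 * L * D / (T : ℝ) ^ 3) := by
        ring
      have heq3 : 2001 * q ^ 2 * L * D / (T : ℝ) ^ 3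
          = 2001 * (q ^ 2 * L * D / (T : ℝ) ^ 3) := by ring
      rw [heq1, heq2, heq3]
      linarith
    linarith [e2, e3, e4, hfinal]
  · rw [div_le_div_iff₀ (pow_pos hT0 3) (pow_pos hT0 2)]
    nlinarith [mul_le_mul_of_nonneg_left hqdT
      (mul_nonneg (mul_nonneg (mul_nonneg (by norm_num : (0:ℝ) ≤ 2001) hL.le) hD0)
        (sq_nonneg ((T:ℝ)))), hT0]
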